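/- Let ℓ ≥ 3 and set Ω'_ℓ := Σ_{i=2}^{ℓ} e_{ε₁−ε_i} e_{ε₁+ε_i} ∈ U(so(2ℓ,ℂ)) (the factors appearing here pairwise commute). For every n ≥ 1: (a) [E, (Ω'_ℓ)ⁿ] = 0 for every simple positive root vector E of so(2ℓ,ℂ) (i.e. for E = e_{ε_k−ε_{k+1}}, 1 ≤ k ≤ ℓ−1, and E = e_{ε_{ℓ−1}+ε_ℓ}); and (b) [H(a), (Ω'_ℓ)ⁿ] = 2n·a₁·(Ω'_ℓ)ⁿ for every a ∈ ℂ^ℓ. Thus (Ω'_ℓ)ⁿ is a highest weight vector of weight 2nε₁ = nθ (θ the highest root) for the adjoint action of so(2ℓ,ℂ) on its universal enveloping algebra. (This is the finite-dimensional Lie-algebraic content of the statement that v_n = (Σ_{i=2}^{ℓ} e_{ε₁−ε_i}(−1)e_{ε₁+ε_i}(−1))ⁿ·1 is a singular vector in V^{n−ℓ+1}(D_ℓ).) -/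

import Mathlib

open Matrix

attribute [local instance 100] LieRing.ofAssociativeRing

noncomputable section

/-- The symmetric `2n × 2n` matrix `G` with `G_{i, n+i} = G_{n+i, i} = 1` (`1 ≤ i ≤ n`) and all
other entries zero (written here with 0-indexed indices `0, …, 2n-1`). -/
def Gmat (n : ℕ) : Matrix (Fin (2*n)) (Fin (2*n)) ℂ :=
  Matrix.of fun i j => if (i : ℕ) + n = (j : ℕ) ∨ (j : ℕ) + n = (i : ℕ) then 1 else 0

/-- The split orthogonal Lie algebra `so(2n, ℂ)`: the Lie algebra of `2n × 2n` complex
matrices `X` with `Xᵀ G + G X = 0`, i.e. the skew-adjoint matrices for the form `Gmat n`. -/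
def so (n : ℕ) : LieSubalgebra ℂ (Matrix (Fin (2*n)) (Fin (2*n)) ℂ) :=
  skewAdjointMatricesLieSubalgebra (Gmat n)

/-- The inclusion `{0, …, n-1} ⊆ {0, …, 2n-1}` of indices. -/
def lo {n : ℕ} (i : Fin n) : Fin (2*n) := ⟨(i : ℕ), by have := i.isLt; omega⟩

/-- The index `n + i ∈ {n, …, 2n-1}`. -/
def hi {n : ℕ} (i : Fin n) : Fin (2*n) := ⟨n + (i : ℕ), by have := i.isLt; omega⟩

/-- The matrix `e_{ε_i − ε_j} = E_{i,j} − E_{n+j, n+i}`. -/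
def eM {n : ℕ} (i j : Fin n) : Matrix (Fin (2*n)) (Fin (2*n)) ℂ :=
  Matrix.single (lo i) (lo j) 1 - Matrix.single (hi j) (hi i) 1

/-- The matrix `e_{ε_i + ε_j} = E_{i,n+j} − E_{j, n+i}`. -/
def eP {n : ℕ} (i j : Fin n) : Matrix (Fin (2*n)) (Fin (2*n)) ℂ :=
  Matrix.single (lo i) (hi j) 1 - Matrix.single (lo j) (hi i) 1

/-- The "swap" `b ↦ b ± n` on indices, so that `Gmat n k b = δ_{k, Gsw b}`. -/
def Gsw {n : ℕ} (b : Fin (2*n)) : Fin (2*n) :=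
  ⟨if (b:ℕ) < n then (b:ℕ) + n else (b:ℕ) - n, by have := b.isLt; split <;> omega⟩

lemma Gmat_apply {n : ℕ} (k b : Fin (2*n)) :
    Gmat n k b = if k = Gsw b then 1 else 0 := by
  have hk := k.isLt; have hb := b.isLt
  have h : ((k:ℕ) + n = (b:ℕ) ∨ (b:ℕ) + n = (k:ℕ)) ↔ (k = Gsw b) := by
    rw [Fin.ext_iff]
    show _ ↔ (k:ℕ) = if (b:ℕ) < n then (b:ℕ) + n else (b:ℕ) - n
    split <;> omega
  simp only [Gmat, Matrix.of_apply]
  rw [if_congr h rfl rfl]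

lemma mul_Gmat_apply {n : ℕ} (M : Matrix (Fin (2*n)) (Fin (2*n)) ℂ) (a b : Fin (2*n)) :
    (M * Gmat n) a b = M a (Gsw b) := by
  rw [Matrix.mul_apply]
  rw [Finset.sum_congr rfl fun k _ => by rw [Gmat_apply]]
  simp

lemma Gmat_mul_apply {n : ℕ} (M : Matrix (Fin (2*n)) (Fin (2*n)) ℂ) (a b : Fin (2*n)) :
    (Gmat n * M) a b = M (Gsw a) b := by
  rw [Matrix.mul_apply]
  have h' : ∀ k : Fin (2*n), Gmat n a k = if k = Gsw a then 1 else 0 := by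
    intro k
    have hk := k.isLt; have ha := a.isLt
    have h : ((a:ℕ) + n = (k:ℕ) ∨ (k:ℕ) + n = (a:ℕ)) ↔ (k = Gsw a) := by
      rw [Fin.ext_iff]
      show _ ↔ (k:ℕ) = if (a:ℕ) < n then (a:ℕ) + n else (a:ℕ) - n
      split <;> omega
    simp only [Gmat, Matrix.of_apply]
    rw [if_congr h rfl rfl]
  rw [Finset.sum_congr rfl fun k _ => by rw [h' k]]
  simp

theorem eM_mem {n : ℕ} (i j : Fin n) : eM i j ∈ so n := by
  rw [so, mem_skewAdjointMatricesLieSubalgebra, mem_skewAdjointMatricesSubmodule]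
  show (eM i j)ᵀ * Gmat n = Gmat n * (-(eM i j))
  ext a b
  rw [mul_Gmat_apply, Gmat_mul_apply]
  have hi' := i.isLt; have hj' := j.isLt
  have ha := a.isLt; have hb := b.isLt
  simp only [eM, Matrix.transpose_apply, Matrix.neg_apply, Matrix.sub_apply,
    Matrix.single, Matrix.of_apply, lo, hi, Gsw, Fin.ext_iff]
  split_ifs <;> first | omega | norm_num

theorem eP_mem {n : ℕ} (i j : Fin n) : eP i j ∈ so n := by
  rw [so, mem_skewAdjointMatricesLieSubalgebra, mem_skewAdjointMatricesSubmodule]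
  show (eP i j)ᵀ * Gmat n = Gmat n * (-(eP i j))
  ext a b
  rw [mul_Gmat_apply, Gmat_mul_apply]
  have hi' := i.isLt; have hj' := j.isLt
  have ha := a.isLt; have hb := b.isLt
  simp only [eP, Matrix.transpose_apply, Matrix.neg_apply, Matrix.sub_apply,
    Matrix.single, Matrix.of_apply, lo, hi, Gsw, Fin.ext_iff]
  split_ifs <;> first | omega | norm_num

/-- `e_{ε_i − ε_j}` as an element of `so(2n, ℂ)`. -/
def eMinus {n : ℕ} (i j : Fin n) : so n := ⟨eM i j, eM_mem i j⟩

/-- `e_{ε_i + ε_j}` as an element of `so(2n, ℂ)`. -/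
def ePlus {n : ℕ} (i j : Fin n) : so n := ⟨eP i j, eP_mem i j⟩

/-- The Cartan element `H(a) = Σ_i a_i (E_{i,i} − E_{n+i,n+i})` as a matrix. -/
def Hmat {n : ℕ} (a : Fin n → ℂ) : Matrix (Fin (2*n)) (Fin (2*n)) ℂ :=
  ∑ i, a i • (Matrix.single (lo i) (lo i) 1 - Matrix.single (hi i) (hi i) 1)

theorem Hmat_mem {n : ℕ} (a : Fin n → ℂ) : Hmat a ∈ so n := by
  rw [so, mem_skewAdjointMatricesLieSubalgebra, mem_skewAdjointMatricesSubmodule]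
  show (Hmat a)ᵀ * Gmat n = Gmat n * (-(Hmat a))
  ext x y
  rw [mul_Gmat_apply, Gmat_mul_apply]
  have hx := x.isLt; have hy := y.isLt
  simp only [Hmat, Matrix.transpose_apply, Matrix.neg_apply, Matrix.sum_apply,
    Matrix.smul_apply, Matrix.sub_apply, Matrix.single, Matrix.of_apply,
    smul_eq_mul, neg_eq_iff_eq_neg, ← Finset.sum_neg_distrib]
  apply Finset.sum_congr rfl
  intro i _
  have hi' := i.isLt
  simp only [lo, hi, Gsw, Fin.ext_iff]
  split_ifs <;> first | omega | ring

/-- `H(a)` as an element of `so(2n, ℂ)` (the general element of the diagonal Cartan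
subalgebra). -/
def Hcar {n : ℕ} (a : Fin n → ℂ) : so n := ⟨Hmat a, Hmat_mem a⟩

/-- The universal enveloping algebra `U(so(2n, ℂ))`. -/
abbrev Uso (n : ℕ) : Type := UniversalEnvelopingAlgebra ℂ (so n)

/-- The canonical embedding `so(2n, ℂ) → U(so(2n, ℂ))`. -/
def uι {n : ℕ} (x : so n) : Uso n := UniversalEnvelopingAlgebra.ι ℂ x

/-- The element `Ω'_ℓ = Σ_{i=2}^{ℓ} e_{ε₁−ε_i} e_{ε₁+ε_i}` of `U(so(2ℓ, ℂ))`
(0-indexed: `Σ_{0 < i ≤ ℓ-1} e_{ε₀−ε_i} e_{ε₀+ε_i}`). -/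
def Omega' (l : ℕ) (hl : 0 < l) : Uso l :=
  ∑ i ∈ Finset.univ.filter fun i : Fin l => 0 < (i : ℕ),
    uι (eMinus ⟨0, hl⟩ i) * uι (ePlus ⟨0, hl⟩ i)


-- AUX START
section Aux
variable {m : ℕ}

@[simp] lemma lo_eq_lo {i j : Fin m} : (lo i = lo j) ↔ i = j := by
  simp [lo, Fin.ext_iff]
@[simp] lemma hi_eq_hi {i j : Fin m} : (hi i = hi j) ↔ i = j := by
  simp [hi, Fin.ext_iff]
@[simp] lemma lo_eq_hi {i j : Fin m} : (lo i = hi j) ↔ False := by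
  have := i.isLt; have := j.isLt
  simp [lo, hi, Fin.ext_iff]; omega
@[simp] lemma hi_eq_lo {i j : Fin m} : (hi i = lo j) ↔ False := by
  have := i.isLt; have := j.isLt
  simp [lo, hi, Fin.ext_iff]; omega

lemma std_mul {N : ℕ} (i j k m' : Fin N) (c d : ℂ) :
    Matrix.single i j c * Matrix.single k m' d =
      if j = k then Matrix.single i m' (c * d) else 0 := by
  split_ifs with h
  · subst h; exact Matrix.single_mul_single_same ..
  · exact Matrix.single_mul_single_of_ne (h := h) ..

lemma commMM (k k' z i : Fin m) :
    eM k k' * eM z i - eM z i * eM k k' =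
      (if k' = z then eM k i else 0) - (if i = k then eM z k' else 0) := by
  simp only [eM, sub_mul, mul_sub, std_mul, lo_eq_lo, hi_eq_hi, lo_eq_hi, hi_eq_lo,
    if_false, one_mul]
  split_ifs <;> subst_vars <;> first | abel1 | simp_all

lemma commMP (k k' z i : Fin m) :
    eM k k' * eP z i - eP z i * eM k k' =
      (if k' = z then eP k i else 0) + (if i = k' then eP z k else 0) := by
  simp only [eM, eP, sub_mul, mul_sub, std_mul, lo_eq_lo, hi_eq_hi, lo_eq_hi, hi_eq_lo,
    if_false, one_mul]
  split_ifs <;> subst_vars <;> first | abel1 | simp_all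

lemma commPP (p q z i : Fin m) :
    eP p q * eP z i - eP z i * eP p q = 0 := by
  simp only [eP, sub_mul, mul_sub, std_mul, lo_eq_lo, hi_eq_hi, lo_eq_hi, hi_eq_lo,
    if_false, one_mul]
  abel

end Aux
set_option synthInstance.maxHeartbeats 1000000
set_option maxHeartbeats 1000000
section Aux2
variable {m : ℕ}

lemma H_mul_lo (a : Fin m → ℂ) (i : Fin m) (j : Fin (2*m)) :
    Hmat a * Matrix.single (lo i) j (1:ℂ) = a i • Matrix.single (lo i) j 1 := by
  rw [Hmat, Finset.sum_mul]
  simp only [smul_mul_assoc, sub_mul, std_mul, lo_eq_lo, hi_eq_lo, if_false, one_mul,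
    sub_zero, smul_ite, smul_zero, if_true]
  rw [Finset.sum_ite_eq']
  simp

lemma H_mul_hi (a : Fin m → ℂ) (i : Fin m) (j : Fin (2*m)) :
    Hmat a * Matrix.single (hi i) j (1:ℂ) = -(a i) • Matrix.single (hi i) j 1 := by
  rw [Hmat, Finset.sum_mul]
  simp only [smul_mul_assoc, sub_mul, std_mul, hi_eq_hi, lo_eq_hi, if_false, one_mul,
    zero_sub, smul_neg, smul_ite, smul_zero]
  simp [Finset.sum_ite_eq', neg_smul]

lemma lo_mul_H (a : Fin m → ℂ) (i : Fin (2*m)) (j : Fin m) :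
    Matrix.single i (lo j) (1:ℂ) * Hmat a = a j • Matrix.single i (lo j) 1 := by
  rw [Hmat, Finset.mul_sum]
  simp only [mul_smul_comm, mul_sub, std_mul, lo_eq_lo, lo_eq_hi, if_false, one_mul,
    sub_zero, smul_ite, smul_zero]
  simp [Finset.sum_ite_eq]

lemma hi_mul_H (a : Fin m → ℂ) (i : Fin (2*m)) (j : Fin m) :
    Matrix.single i (hi j) (1:ℂ) * Hmat a = -(a j) • Matrix.single i (hi j) 1 := by
  rw [Hmat, Finset.mul_sum]
  simp only [mul_smul_comm, mul_sub, std_mul, hi_eq_hi, hi_eq_lo, if_false, one_mul,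
    zero_sub, smul_neg, smul_ite, smul_zero]
  simp [Finset.sum_ite_eq, neg_smul]

lemma commHM (a : Fin m → ℂ) (z i : Fin m) :
    Hmat a * eM z i - eM z i * Hmat a = (a z - a i) • eM z i := by
  rw [eM, mul_sub, sub_mul, H_mul_lo, H_mul_hi, lo_mul_H, hi_mul_H]
  module

lemma commHP (a : Fin m → ℂ) (z i : Fin m) :
    Hmat a * eP z i - eP z i * Hmat a = (a z + a i) • eP z i := by
  rw [eP, mul_sub, sub_mul, H_mul_lo, H_mul_lo, hi_mul_H, hi_mul_H]
  module

lemma so_br {x y z : so m} (h : (x : Matrix (Fin (2*m)) (Fin (2*m)) ℂ) * y - y * x = z) :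
    ⁅x, y⁆ = z := by
  apply Subtype.ext
  rw [LieSubalgebra.coe_bracket, Ring.lie_def, h]

lemma lieMM (k k' z i : Fin m) :
    ⁅eMinus k k', eMinus z i⁆ =
      (if k' = z then eMinus k i else 0) - (if i = k then eMinus z k' else 0) := by
  apply so_br
  have : (((if k' = z then eMinus k i else 0) - (if i = k then eMinus z k' else 0) : so m) :
      Matrix (Fin (2*m)) (Fin (2*m)) ℂ)
      = (if k' = z then eM k i else 0) - (if i = k then eM z k' else 0) := by
    split_ifs <;> simp [eMinus]
  rw [this]
  exact commMM k k' z i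

lemma lieMP (k k' z i : Fin m) :
    ⁅eMinus k k', ePlus z i⁆ =
      (if k' = z then ePlus k i else 0) + (if i = k' then ePlus z k else 0) := by
  apply so_br
  have : (((if k' = z then ePlus k i else 0) + (if i = k' then ePlus z k else 0) : so m) :
      Matrix (Fin (2*m)) (Fin (2*m)) ℂ)
      = (if k' = z then eP k i else 0) + (if i = k' then eP z k else 0) := by
    split_ifs <;> simp [ePlus]
  rw [this]
  exact commMP k k' z i

lemma liePP (p q z i : Fin m) : ⁅ePlus p q, ePlus z i⁆ = 0 := by
  apply so_br
  show eP p q * eP z i - eP z i * eP p q = ((0 : so m) : Matrix (Fin (2*m)) (Fin (2*m)) ℂ)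
  rw [commPP]
  simp

lemma lieHM (a : Fin m → ℂ) (z i : Fin m) :
    ⁅Hcar a, eMinus z i⁆ = (a z - a i) • eMinus z i := by
  apply so_br
  show Hmat a * eM z i - eM z i * Hmat a
      = (((a z - a i) • eMinus z i : so m) : Matrix (Fin (2*m)) (Fin (2*m)) ℂ)
  rw [commHM]
  rfl

lemma lieHP (a : Fin m → ℂ) (z i : Fin m) :
    ⁅Hcar a, ePlus z i⁆ = (a z + a i) • ePlus z i := by
  apply so_br
  show Hmat a * eP z i - eP z i * Hmat a
      = (((a z + a i) • ePlus z i : so m) : Matrix (Fin (2*m)) (Fin (2*m)) ℂ)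
  rw [commHP]
  rfl

lemma uι_comm (x y : so m) : uι x * uι y - uι y * uι x = uι ⁅x, y⁆ := by
  show _ = (UniversalEnvelopingAlgebra.ι ℂ) ⁅x, y⁆
  rw [LieHom.map_lie, Ring.lie_def]
  rfl

@[simp] lemma uι_zero : uι (0 : so m) = 0 := by
  show (UniversalEnvelopingAlgebra.ι ℂ).toLinearMap (0 : so m) = 0
  exact LinearMap.map_zero _

lemma uι_smul (c : ℂ) (x : so m) : uι (c • x) = c • uι x := by
  show (UniversalEnvelopingAlgebra.ι ℂ).toLinearMap (c • x)
      = c • (UniversalEnvelopingAlgebra.ι ℂ).toLinearMap x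
  exact LinearMap.map_smul _ c x

lemma uι_neg (x : so m) : uι (-x) = -uι x := by
  show (UniversalEnvelopingAlgebra.ι ℂ).toLinearMap (-x) = -(UniversalEnvelopingAlgebra.ι ℂ).toLinearMap x
  exact LinearMap.map_neg _ x

lemma uι_add (x y : so m) : uι (x + y) = uι x + uι y := by
  show (UniversalEnvelopingAlgebra.ι ℂ).toLinearMap (x + y) = _
  rw [LinearMap.map_add]; rfl

end Aux2
section Core
variable {l : ℕ}

lemma neg_ite'' {α : Type*} [Neg α] (c : Prop) [Decidable c] (a b : α) :
    -(if c then a else b) = if c then -a else -b := by split_ifs <;> rfl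

lemma ePlus_neg {m : ℕ} (p z : Fin m) : -(ePlus p z) = ePlus z p := by
  apply Subtype.ext
  show -(eP p z) = eP z p
  rw [eP, eP, neg_sub]

lemma liePM {m : ℕ} (p q z i : Fin m) :
    ⁅ePlus p q, eMinus z i⁆ =
      (if i = p then -(ePlus z q) else 0) + (if i = q then ePlus z p else 0) := by
  rw [← lie_skew, lieMP]
  rw [neg_add, neg_ite'', neg_ite'', neg_zero]
  congr 1
  rw [ePlus_neg]
  exact if_congr eq_comm rfl rfl

lemma omega_comm (hl : 0 < l) (e : so l) :
    uι e * Omega' l hl - Omega' l hl * uι e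
      = ∑ i ∈ Finset.univ.filter (fun i : Fin l => 0 < (i : ℕ)),
          (uι ⁅e, eMinus ⟨0, hl⟩ i⁆ * uι (ePlus ⟨0, hl⟩ i)
            + uι (eMinus ⟨0, hl⟩ i) * uι ⁅e, ePlus ⟨0, hl⟩ i⁆) := by
  rw [Omega', Finset.mul_sum, Finset.sum_mul, ← Finset.sum_sub_distrib]
  refine Finset.sum_congr rfl fun i _ => ?_
  rw [← uι_comm, ← uι_comm]
  noncomm_ring

lemma ePlus_self_zero (hl : 0 < l) : ePlus (⟨0, hl⟩ : Fin l) ⟨0, hl⟩ = 0 := by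
  apply Subtype.ext
  show eP _ _ = (0 : Matrix (Fin (2*l)) (Fin (2*l)) ℂ)
  rw [eP, sub_self]

lemma coreM (hl3 : 3 ≤ l) (k : ℕ) (hk : k + 1 < l) :
    uι (eMinus (⟨k, by omega⟩ : Fin l) ⟨k+1, hk⟩) * Omega' l (lt_of_lt_of_le (by norm_num) hl3)
      = Omega' l (lt_of_lt_of_le (by norm_num) hl3) * uι (eMinus (⟨k, by omega⟩ : Fin l) ⟨k+1, hk⟩) := by
  have hl : 0 < l := by omega
  rw [← sub_eq_zero, omega_comm hl]
  have h1 : ∀ i ∈ Finset.univ.filter (fun i : Fin l => 0 < (i : ℕ)),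
      (uι ⁅eMinus (⟨k, by omega⟩ : Fin l) ⟨k+1, hk⟩, eMinus ⟨0, hl⟩ i⁆ * uι (ePlus ⟨0, hl⟩ i)
        + uι (eMinus ⟨0, hl⟩ i) * uι ⁅eMinus (⟨k, by omega⟩ : Fin l) ⟨k+1, hk⟩, ePlus ⟨0, hl⟩ i⁆)
      = (if i = (⟨k, by omega⟩ : Fin l) then
            -(uι (eMinus (⟨0, hl⟩ : Fin l) ⟨k+1, hk⟩) * uι (ePlus ⟨0, hl⟩ i)) else 0)
        + (if i = (⟨k+1, hk⟩ : Fin l) then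
            uι (eMinus (⟨0, hl⟩ : Fin l) i) * uι (ePlus (⟨0, hl⟩ : Fin l) ⟨k, by omega⟩) else 0) := by
    intro i _
    rw [lieMM, lieMP]
    rw [if_neg (show ¬((⟨k+1, hk⟩ : Fin l) = ⟨0, hl⟩) from by simp [Fin.ext_iff]),
        if_neg (show ¬((⟨k+1, hk⟩ : Fin l) = ⟨0, hl⟩) from by simp [Fin.ext_iff])]
    rw [zero_sub, zero_add]
    simp only [uι_neg, apply_ite uι, neg_ite'', uι_zero, ite_mul, mul_ite, zero_mul,
      mul_zero, neg_mul, neg_zero]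
  rw [Finset.sum_congr rfl h1, Finset.sum_add_distrib, Finset.sum_ite_eq', Finset.sum_ite_eq']
  simp only [Finset.mem_filter, Finset.mem_univ, true_and]
  rcases Nat.eq_zero_or_pos k with hk0 | hk0
  · subst hk0
    rw [if_neg (by simp), if_pos (by simp), ePlus_self_zero, uι_zero, mul_zero, zero_add]
  · rw [if_pos hk0, if_pos (by simp), neg_add_cancel]

lemma coreP (hl3 : 3 ≤ l) :
    uι (ePlus (⟨l-2, by omega⟩ : Fin l) ⟨l-1, by omega⟩) * Omega' l (lt_of_lt_of_le (by norm_num) hl3)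
      = Omega' l (lt_of_lt_of_le (by norm_num) hl3) * uι (ePlus (⟨l-2, by omega⟩ : Fin l) ⟨l-1, by omega⟩) := by
  have hl : 0 < l := by omega
  rw [← sub_eq_zero, omega_comm hl]
  have h1 : ∀ i ∈ Finset.univ.filter (fun i : Fin l => 0 < (i : ℕ)),
      (uι ⁅ePlus (⟨l-2, by omega⟩ : Fin l) ⟨l-1, by omega⟩, eMinus ⟨0, hl⟩ i⁆
            * uι (ePlus ⟨0, hl⟩ i)
        + uι (eMinus ⟨0, hl⟩ i)
            * uι ⁅ePlus (⟨l-2, by omega⟩ : Fin l) ⟨l-1, by omega⟩, ePlus ⟨0, hl⟩ i⁆)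
      = (if i = (⟨l-2, by omega⟩ : Fin l) then
            -(uι (ePlus (⟨0, hl⟩ : Fin l) ⟨l-1, by omega⟩) * uι (ePlus ⟨0, hl⟩ i)) else 0)
        + (if i = (⟨l-1, by omega⟩ : Fin l) then
            uι (ePlus (⟨0, hl⟩ : Fin l) ⟨l-2, by omega⟩) * uι (ePlus ⟨0, hl⟩ i) else 0) := by
    intro i _
    rw [liePM, liePP, uι_zero, mul_zero, add_zero, uι_add]
    simp only [uι_neg, apply_ite uι, neg_ite'', uι_zero, ite_mul, mul_ite, zero_mul,
      mul_zero, neg_mul, neg_zero, add_mul]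
  rw [Finset.sum_congr rfl h1, Finset.sum_add_distrib, Finset.sum_ite_eq', Finset.sum_ite_eq']
  rw [if_pos (by simp [Finset.mem_filter]; omega), if_pos (by simp [Finset.mem_filter]; omega)]
  rw [neg_add_eq_zero]
  have h := uι_comm (ePlus (⟨0, hl⟩ : Fin l) ⟨l-2, by omega⟩) (ePlus (⟨0, hl⟩ : Fin l) ⟨l-1, by omega⟩)
  rw [liePP, uι_zero, sub_eq_zero] at h
  exact h.symm

lemma coreH (hl3 : 3 ≤ l) (a : Fin l → ℂ) :
    uι (Hcar a) * Omega' l (lt_of_lt_of_le (by norm_num) hl3) - Omega' l (lt_of_lt_of_le (by norm_num) hl3) * uι (Hcar a)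
      = (2 * a ⟨0, lt_of_lt_of_le (by norm_num) hl3⟩) • Omega' l (lt_of_lt_of_le (by norm_num) hl3) := by
  have hl : 0 < l := by omega
  rw [omega_comm hl]
  have h1 : ∀ i ∈ Finset.univ.filter (fun i : Fin l => 0 < (i : ℕ)),
      (uι ⁅Hcar a, eMinus ⟨0, hl⟩ i⁆ * uι (ePlus ⟨0, hl⟩ i)
        + uι (eMinus ⟨0, hl⟩ i) * uι ⁅Hcar a, ePlus ⟨0, hl⟩ i⁆)
      = (2 * a ⟨0, hl⟩) • (uι (eMinus ⟨0, hl⟩ i) * uι (ePlus ⟨0, hl⟩ i)) := by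
    intro i _
    rw [lieHM, lieHP, uι_smul, uι_smul, smul_mul_assoc, mul_smul_comm, ← add_smul,
      show (a ⟨0, hl⟩ - a i) + (a ⟨0, hl⟩ + a i) = 2 * a ⟨0, hl⟩ from by ring]
  rw [Finset.sum_congr rfl h1, ← Finset.smul_sum]
  rfl

lemma pow_scale {x A : Uso l} {c : ℂ} (h : x * A - A * x = c • A) (n : ℕ) :
    x * A ^ n - A ^ n * x = ((n : ℂ) * c) • A ^ n := by
  induction n with
  | zero => simp
  | succ n ih =>
    have hx : x * A = A * x + c • A := by rw [← h]; abel
    have ih' : x * A ^ n = A ^ n * x + ((n : ℂ) * c) • A ^ n := by rw [← ih]; abel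
    have key : x * A ^ (n+1) = A ^ (n+1) * x + (((n : ℂ) + 1) * c) • A ^ (n+1) := by
      rw [pow_succ', ← mul_assoc, hx, add_mul, smul_mul_assoc, mul_assoc, ih', mul_add,
        mul_smul_comm, ← mul_assoc, ← pow_succ']
      module
    rw [key]
    push_cast
    module

end Core
/-- Let `ℓ ≥ 3` and `Ω'_ℓ = Σ_{i=2}^{ℓ} e_{ε₁−ε_i} e_{ε₁+ε_i} ∈ U(so(2ℓ, ℂ))`.
For every `n ≥ 1`: (a) `[E, (Ω'_ℓ)ⁿ] = 0` for every simple positive root vector `E` of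
`so(2ℓ, ℂ)` (i.e. `E = e_{ε_k − ε_{k+1}}`, `1 ≤ k ≤ ℓ−1`, and `E = e_{ε_{ℓ−1} + ε_ℓ}`); and
(b) `[H(a), (Ω'_ℓ)ⁿ] = 2n a₁ (Ω'_ℓ)ⁿ` for every `a ∈ ℂ^ℓ`; i.e. `(Ω'_ℓ)ⁿ` is a highest weight
vector of weight `2nε₁ = nθ` for the adjoint action of `so(2ℓ, ℂ)` on `U(so(2ℓ, ℂ))`. -/
theorem omega_prime_pow_highest_weight_vector (l : ℕ) (hl : 3 ≤ l) (n : ℕ) (hn : 1 ≤ n) :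
    (∀ (k : ℕ) (hk : k + 1 < l),
      uι (eMinus (⟨k, by omega⟩ : Fin l) ⟨k+1, hk⟩) * (Omega' l (by omega)) ^ n
        - (Omega' l (by omega)) ^ n * uι (eMinus (⟨k, by omega⟩ : Fin l) ⟨k+1, hk⟩) = 0) ∧
    (uι (ePlus (⟨l-2, by omega⟩ : Fin l) ⟨l-1, by omega⟩) * (Omega' l (by omega)) ^ n
        - (Omega' l (by omega)) ^ n
            * uι (ePlus (⟨l-2, by omega⟩ : Fin l) ⟨l-1, by omega⟩) = 0) ∧
    (∀ a : Fin l → ℂ,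
      uι (Hcar a) * (Omega' l (by omega)) ^ n - (Omega' l (by omega)) ^ n * uι (Hcar a)
        = (2 * (n : ℂ) * a ⟨0, by omega⟩) • (Omega' l (by omega)) ^ n) := by
  refine ⟨?_, ?_, ?_⟩
  · intro k hk
    exact sub_eq_zero.mpr (Commute.pow_right (coreM hl k hk) n)
  · exact sub_eq_zero.mpr (Commute.pow_right (coreP hl) n)
  · intro a
    rw [show (2 * (n : ℂ) * a ⟨0, by omega⟩) = (n : ℂ) * (2 * a ⟨0, by omega⟩) from by ring]
    exact pow_scale (coreH hl a) n

end
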